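/- If E is an equivalence relation on c.e. sets (i.e., W_e = W_i implies e E i) that is computably reducible to E_min(A) for a computable well-ordering A, then there is a computable reduction from E to E_min(A) that is well-defined on c.e. sets. -/

import Mathlib

/-- The `e`-th computably enumerable set of natural numbers: the domain of the
`e`-th partial computable function. -/
def Wce (e : ℕ) : Set ℕ :=
  {x | ((Denumerable.ofNat Nat.Partrec.Code e).eval x).Dom}


/-- A computable well-ordering of ℕ: a computable (Bool-valued) binary relation
whose associated strict relation is a well-order on ℕ. -/
structure CompWO where
  r : ℕ → ℕ → Bool
  comp : Computable₂ r
  wo : IsWellOrder ℕ (fun a b => r a b = true)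

/-- `m` is the `A`-least element of `S`. -/
def IsMinOf (A : CompWO) (S : Set ℕ) (m : ℕ) : Prop :=
  m ∈ S ∧ ∀ x ∈ S, A.r x m = false

/-- The equivalence relation `E_min(A)` on indices of c.e. sets: `W_e` and `W_i`
have the same `A`-least element, or are both empty. -/
def Emin (A : CompWO) (e i : ℕ) : Prop :=
  (Wce e = ∅ ∧ Wce i = ∅) ∨ ∃ m, IsMinOf A (Wce e) m ∧ IsMinOf A (Wce i) m

/-- Computable reducibility of binary relations on ℕ. -/
def CompReducible (E F : ℕ → ℕ → Prop) : Prop :=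
  ∃ h : ℕ → ℕ, Computable h ∧ ∀ x y, E x y ↔ F (h x) (h y)

/-- The order type of a computable well-ordering. -/
noncomputable def CompWO.otype (A : CompWO) : Ordinal :=
  @Ordinal.type ℕ (fun a b => A.r a b = true) A.wo

/-- The `A`-rank of an element: the order type of its set of predecessors. -/
noncomputable def CompWO.rank (A : CompWO) (a : ℕ) : Ordinal :=
  @Ordinal.typein ℕ (fun a b => A.r a b = true) A.wo a

open Nat.Partrec (Code)
open Nat.Partrec.Code

/-- The upward closure of `S` under the ordering `A`. -/
def Ucl (A : CompWO) (S : Set ℕ) : Set ℕ := {x | ∃ y ∈ S, A.r y x = true ∨ y = x}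

theorem subset_Ucl (A : CompWO) (S : Set ℕ) : S ⊆ Ucl A S :=
  fun y hy => ⟨y, hy, Or.inr rfl⟩

theorem Ucl_empty_iff (A : CompWO) (S : Set ℕ) : Ucl A S = ∅ ↔ S = ∅ := by
  constructor
  · intro h
    by_contra hS
    obtain ⟨y, hy⟩ := Set.nonempty_iff_ne_empty.2 hS
    exact absurd (subset_Ucl A S hy) (by simp [h])
  · rintro rfl
    ext x; simp [Ucl]

theorem min_Ucl (A : CompWO) {S : Set ℕ} {m : ℕ} (h : IsMinOf A S m) :
    IsMinOf A (Ucl A S) m := by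
  haveI := A.wo
  refine ⟨subset_Ucl A S h.1, ?_⟩
  rintro x ⟨y, hy, hyx⟩
  by_contra hxm
  rw [Bool.not_eq_false] at hxm
  rcases hyx with hyx | rfl
  · have h1 : A.r y m = true := trans_of (fun a b => A.r a b = true) hyx hxm
    simp [h.2 _ hy] at h1
  · simp [h.2 _ hy] at hxm

theorem min_unique (A : CompWO) {S : Set ℕ} {m m' : ℕ}
    (h : IsMinOf A S m) (h' : IsMinOf A S m') : m = m' := by
  haveI := A.wo
  rcases trichotomous_of (fun a b => A.r a b = true) m m' with hlt | heq | hgt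
  · exact absurd hlt (by simp [h'.2 m h.1])
  · exact heq
  · exact absurd hgt (by simp [h.2 m' h'.1])

theorem exists_min (A : CompWO) {S : Set ℕ} (hS : S.Nonempty) : ∃ m, IsMinOf A S m := by
  haveI := A.wo
  have wf : WellFounded (fun a b => A.r a b = true) := IsWellFounded.wf
  refine ⟨wf.min S hS, wf.min_mem S hS, fun x hx => ?_⟩
  have := wf.not_lt_min S hx
  simpa using this

theorem Ucl_eq_of_min (A : CompWO) {S : Set ℕ} {m : ℕ} (h : IsMinOf A S m) :
    Ucl A S = {x | A.r m x = true ∨ m = x} := by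
  haveI := A.wo
  ext x
  constructor
  · rintro ⟨y, hy, hyx⟩
    rcases trichotomous_of (fun a b => A.r a b = true) m y with hlt | rfl | hgt
    · rcases hyx with hyx | rfl
      · exact Or.inl (trans_of (fun a b => A.r a b = true) hlt hyx)
      · exact Or.inl hlt
    · exact hyx
    · exact absurd hgt (by simp [h.2 y hy])
  · intro hx
    exact ⟨m, h.1, by tauto⟩

/-- There is a computable function taking an index `e` to an index for the
upward closure of `W_e`. -/
theorem key (A : CompWO) :
    ∃ f : ℕ → ℕ, Computable f ∧ ∀ e, Wce (f e) = Ucl A (Wce e) := by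
  classical
  -- the Bool-valued search predicate
  let b : ℕ → ℕ → Bool := fun a n =>
    (evaln n.unpair.2 (Denumerable.ofNat Code a.unpair.1) n.unpair.1).isSome &&
      (A.r n.unpair.1 a.unpair.2 || decide (n.unpair.1 = a.unpair.2))
  have hb : Computable₂ b := by
    have hy : Computable fun q : ℕ × ℕ => q.2.unpair.1 :=
      Computable.fst.comp (Primrec.unpair.to_comp.comp Computable.snd)
    have hs : Computable fun q : ℕ × ℕ => q.2.unpair.2 :=
      Computable.snd.comp (Primrec.unpair.to_comp.comp Computable.snd)
    have hx : Computable fun q : ℕ × ℕ => q.1.unpair.2 :=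
      Computable.snd.comp (Primrec.unpair.to_comp.comp Computable.fst)
    have hc : Computable fun q : ℕ × ℕ => Denumerable.ofNat Code q.1.unpair.1 :=
      (Computable.ofNat Code).comp
        (Computable.fst.comp (Primrec.unpair.to_comp.comp Computable.fst))
    have hev : Computable fun q : ℕ × ℕ =>
        evaln q.2.unpair.2 (Denumerable.ofNat Code q.1.unpair.1) q.2.unpair.1 :=
      primrec_evaln.to_comp.comp ((hs.pair hc).pair hy)
    have h1 : Computable fun q : ℕ × ℕ =>
        (evaln q.2.unpair.2 (Denumerable.ofNat Code q.1.unpair.1) q.2.unpair.1).isSome :=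
      Primrec.option_isSome.to_comp.comp hev
    have h2 : Computable fun q : ℕ × ℕ => A.r q.2.unpair.1 q.1.unpair.2 :=
      A.comp.comp hy hx
    have h3 : Computable fun q : ℕ × ℕ => decide (q.2.unpair.1 = q.1.unpair.2) :=
      ((Primrec.eq (α := ℕ)).decide.to_comp).comp hy hx
    exact (Primrec.and.to_comp).comp h1 ((Primrec.or.to_comp).comp h2 h3)
  let p : ℕ → ℕ →. Bool := fun a n => Part.some (b a n)
  have hp : Partrec₂ p := hb.partrec₂
  have hg : Nat.Partrec fun a => Nat.rfind (p a) := Partrec.nat_iff.1 (Partrec.rfind hp)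
  obtain ⟨c, hc⟩ := exists_code.1 hg
  refine ⟨fun e => Encodable.encode (c.curry e),
    Computable.encode.comp (primrec₂_curry.to_comp.comp (Computable.const c) Computable.id), ?_⟩
  intro e
  ext x
  have hWf : ((Denumerable.ofNat Code (Encodable.encode (c.curry e))).eval x).Dom ↔
      (Nat.rfind (p (Nat.pair e x))).Dom := by
    rw [Denumerable.ofNat_encode, eval_curry, hc]
  simp only [Wce, Set.mem_setOf_eq, hWf]
  rw [Nat.rfind_dom]
  constructor
  · rintro ⟨n, hn, -⟩
    have hbn : b (Nat.pair e x) n = true := by simpa [p, Part.mem_some_iff] using hn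
    simp only [b, Nat.unpair_pair, Bool.and_eq_true, Bool.or_eq_true, decide_eq_true_eq,
      Option.isSome_iff_exists] at hbn
    obtain ⟨⟨v, hv⟩, hor⟩ := hbn
    refine ⟨n.unpair.1, ?_, hor⟩
    have : v ∈ (Denumerable.ofNat Code e).eval n.unpair.1 :=
      evaln_complete.2 ⟨n.unpair.2, hv⟩
    exact Part.dom_iff_mem.2 ⟨v, this⟩
  · rintro ⟨y, hy, hor⟩
    obtain ⟨v, hv⟩ := Part.dom_iff_mem.1 hy
    obtain ⟨k, hk⟩ := evaln_complete.1 hv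
    refine ⟨Nat.pair y k, ?_, fun _ => trivial⟩
    have hbt : b (Nat.pair e x) (Nat.pair y k) = true := by
      simp only [b, Nat.unpair_pair, Bool.and_eq_true, Bool.or_eq_true, decide_eq_true_eq,
        Option.isSome_iff_exists]
      exact ⟨⟨v, hk⟩, hor⟩
    simp [p, hbt]

theorem Emin_Ucl (A : CompWO) {f : ℕ → ℕ} (hf : ∀ e, Wce (f e) = Ucl A (Wce e))
    (e i : ℕ) : Emin A e i ↔ Emin A (f e) (f i) := by
  constructor
  · rintro (⟨h1, h2⟩ | ⟨m, h1, h2⟩)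
    · exact Or.inl ⟨by rw [hf, (Ucl_empty_iff A _)]; exact h1,
        by rw [hf, (Ucl_empty_iff A _)]; exact h2⟩
    · exact Or.inr ⟨m, by rw [hf]; exact min_Ucl A h1, by rw [hf]; exact min_Ucl A h2⟩
  · rintro (⟨h1, h2⟩ | ⟨m, h1, h2⟩)
    · rw [hf, Ucl_empty_iff] at h1
      rw [hf, Ucl_empty_iff] at h2
      exact Or.inl ⟨h1, h2⟩
    · rw [hf] at h1 h2
      have hne : (Wce e).Nonempty := by
        rcases Set.eq_empty_or_nonempty (Wce e) with hemp | hne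
        · have hm := h1.1
          rw [hemp, (Ucl_empty_iff A ∅).2 rfl] at hm
          exact absurd hm (Set.notMem_empty m)
        · exact hne
      have hni : (Wce i).Nonempty := by
        rcases Set.eq_empty_or_nonempty (Wce i) with hemp | hne
        · have hm := h2.1
          rw [hemp, (Ucl_empty_iff A ∅).2 rfl] at hm
          exact absurd hm (Set.notMem_empty m)
        · exact hne
      obtain ⟨me, hme⟩ := exists_min A hne
      obtain ⟨mi, hmi⟩ := exists_min A hni
      have he2 : me = m := min_unique A (min_Ucl A hme) h1
      have hi2 : mi = m := min_unique A (min_Ucl A hmi) h2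
      exact Or.inr ⟨m, he2 ▸ hme, hi2 ▸ hmi⟩

theorem Ucl_eq_of_Emin (A : CompWO) {e i : ℕ} (h : Emin A e i) :
    Ucl A (Wce e) = Ucl A (Wce i) := by
  rcases h with ⟨h1, h2⟩ | ⟨m, h1, h2⟩
  · rw [(Ucl_empty_iff A _).2 h1, (Ucl_empty_iff A _).2 h2]
  · rw [Ucl_eq_of_min A h1, Ucl_eq_of_min A h2]

/-- If an equivalence relation on c.e. sets is computably reducible to E_min(A),
then there is such a reduction that is moreover well-defined on c.e. sets. -/
theorem stmt7 (A : CompWO) (E : ℕ → ℕ → Prop) (hE : Equivalence E)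
    (hEce : ∀ e i, Wce e = Wce i → E e i)
    (h : CompReducible E (Emin A)) :
    ∃ f : ℕ → ℕ, Computable f ∧ (∀ x y, E x y ↔ Emin A (f x) (f y)) ∧
      ∀ e i, Wce e = Wce i → Wce (f e) = Wce (f i) := by
  obtain ⟨h0, hc0, hiff⟩ := h
  obtain ⟨g, hcg, hWg⟩ := key A
  refine ⟨fun e => g (h0 e), hcg.comp hc0, ?_, ?_⟩
  · intro x y
    rw [hiff x y, Emin_Ucl A hWg]
  · intro e i hW
    have hmin : Emin A (h0 e) (h0 i) := (hiff e i).1 (hEce e i hW)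
    rw [hWg, hWg, Ucl_eq_of_Emin A hmin]
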